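/- Every proper level-1 network is tree-based. -/

import Mathlib

open SimpleGraph

/-- Degree of a vertex (as the cardinality of its neighbour set). -/
noncomputable def deg {W : Type*} (G : SimpleGraph W) (v : W) : ℕ :=
  (G.neighborSet v).ncard

/-- `T` is a support-tree for `G` with leaf set `X`: a spanning tree of `G`
whose leaves (vertices of degree at most 1) are exactly `X`. -/
def IsSupportTree {W : Type*} (G T : SimpleGraph W) (X : Set W) : Prop :=
  T ≤ G ∧ T.IsTree ∧ {v | deg T v ≤ 1} = X

/-- A graph is tree-based on `X` if it has a support-tree with leaf set `X`. -/
def TreeBased {W : Type*} (G : SimpleGraph W) (X : Set W) : Prop :=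
  ∃ T, IsSupportTree G T X

/-- An unrooted phylogenetic network on `X`: a connected graph all of whose
vertices have degree 1 or 3 (allowing the single-vertex convention via `≤ 1`),
whose leaves are exactly `X`. -/
def IsNetwork {W : Type*} (G : SimpleGraph W) (X : Set W) : Prop :=
  G.Connected ∧ (∀ v, deg G v ≤ 1 ∨ deg G v = 3) ∧ {v | deg G v ≤ 1} = X

/-- The cut-edge `{u,v}` induces a split of `X`: each side of the deleted edge
contains an element of `X`. -/
def InducesSplit {W : Type*} (G : SimpleGraph W) (X : Set W) (u v : W) : Prop :=
  (∃ a ∈ X, (G.deleteEdges {s(u, v)}).Reachable u a) ∧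
    ∃ b ∈ X, (G.deleteEdges {s(u, v)}).Reachable v b

/-- A network is proper if every cut-edge induces a split of `X`. -/
def ProperNet {W : Type*} (G : SimpleGraph W) (X : Set W) : Prop :=
  ∀ u v : W, (s(u, v) ∈ G.edgeSet ∧ G.IsBridge s(u, v)) → InducesSplit G X u v

/-- A network is simple if every cut-edge is trivial, i.e. has a leaf endpoint. -/
def SimpleNet {W : Type*} (G : SimpleGraph W) (X : Set W) : Prop :=
  ∀ u v : W, (s(u, v) ∈ G.edgeSet ∧ G.IsBridge s(u, v)) → u ∈ X ∨ v ∈ X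

/-- A graph is bridgeless if it has no cut-edge. -/
def Bridgeless {W : Type*} (H : SimpleGraph W) : Prop :=
  ∀ e, ¬ (e ∈ H.edgeSet ∧ H.IsBridge e)

/-- A blob of `G`: a maximal connected subgraph without a cut-edge that is not
a single vertex. -/
def IsBlob {W : Type*} (G : SimpleGraph W) (B : G.Subgraph) : Prop :=
  B.verts.Nontrivial ∧ B.Connected ∧ Bridgeless B.coe ∧
    ∀ B' : G.Subgraph, B'.verts.Nontrivial → B'.Connected → Bridgeless B'.coe →
      B ≤ B' → B = B'

/-- The simple network `B_N` associated to a blob `B`: the union of `B` with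
all cut-edges of `G` incident to `B`. -/
def blobNet {W : Type*} (G : SimpleGraph W) (B : G.Subgraph) : G.Subgraph where
  verts := B.verts ∪ {w | ∃ u ∈ B.verts, s(u, w) ∈ G.edgeSet ∧ G.IsBridge s(u, w)}
  Adj a b := B.Adj a b ∨ ((s(a, b) ∈ G.edgeSet ∧ G.IsBridge s(a, b)) ∧ (a ∈ B.verts ∨ b ∈ B.verts))
  adj_sub := by
    rintro v w (h | ⟨h, -⟩)
    · exact B.adj_sub h
    · exact (SimpleGraph.mem_edgeSet G).mp h.1
  edge_vert := by
    rintro v w (h | ⟨h, hv | hw⟩)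
    · exact Or.inl (B.edge_vert h)
    · exact Or.inl hv
    · exact Or.inr ⟨w, hw, by rwa [Sym2.eq_swap]⟩
  symm := ⟨by
    rintro v w (h | ⟨h, hc⟩)
    · exact Or.inl (B.adj_symm h)
    · exact Or.inr ⟨by rwa [Sym2.eq_swap], hc.symm⟩⟩

/-- The leaf set of `B_N`: endpoints of incident cut-edges not lying in `B`. -/
def blobNetLeaves {W : Type*} (G : SimpleGraph W) (B : G.Subgraph) :
    Set (blobNet G B).verts :=
  {w | (w : W) ∉ B.verts}

/-- `G` is a level-`k` network: at most `k` edges must be removed from each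
blob to obtain a tree. -/
def Level {W : Type*} (G : SimpleGraph W) (k : ℕ) : Prop :=
  ∀ B : G.Subgraph, IsBlob G B → B.edgeSet.ncard ≤ B.verts.ncard - 1 + k
/-- The network `N − x`: delete leaf `x` and its incident edge and suppress the
resulting degree-2 vertex `v` (the former neighbour of `x`). -/
def suppressAdj {V : Type*} (G : SimpleGraph V) (x v : V) :
    SimpleGraph {w : V // w ≠ x ∧ w ≠ v} where
  Adj a b := a ≠ b ∧ (G.Adj a b ∨ (G.Adj v a ∧ G.Adj v b))
  symm := ⟨by
    rintro a b ⟨h1, h2 | ⟨h3, h4⟩⟩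
    · exact ⟨h1.symm, Or.inl h2.symm⟩
    · exact ⟨h1.symm, Or.inr ⟨h4, h3⟩⟩⟩
  loopless := ⟨by rintro a ⟨h1, -⟩; exact h1 rfl⟩

/-- The network `C_e(x,y)`: replace the edge `e = {u,v}` of `C` by a path
`u – w₁ – w₂ – v` and attach pendant leaves `x = Sum.inr 2` to `w₁ = Sum.inr 0`
and `y = Sum.inr 3` to `w₂ = Sum.inr 1`. -/
def extGraph {W : Type*} (C : SimpleGraph W) (u v : W) : SimpleGraph (W ⊕ Fin 4) :=
  SimpleGraph.fromEdgeSet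
    ((Sym2.map Sum.inl) '' (C.edgeSet \ {s(u, v)}) ∪
      {s(Sum.inl u, Sum.inr 0), s(Sum.inr 0, Sum.inr 1), s(Sum.inr 1, Sum.inl v),
       s(Sum.inr 0, Sum.inr 2), s(Sum.inr 1, Sum.inr 3)})

/-- The leaves `x` and `y` of `C_e(x,y)`. -/
def extLeaves (W : Type*) : Set (W ⊕ Fin 4) := {Sum.inr 2, Sum.inr 3}

/-- The Petersen graph, realized as the Kneser graph K(5,2). -/
def petersen : SimpleGraph {s : Finset (Fin 5) // s.card = 2} where
  Adj a b := Disjoint (a : Finset (Fin 5)) (b : Finset (Fin 5))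
  symm := ⟨fun a b h => h.symm⟩
  loopless := ⟨fun a h => by
    have h2 : (a : Finset (Fin 5)) = ∅ := by
      simpa using disjoint_self.mp h
    have := a.2
    rw [h2] at this
    simp at this⟩

/-- `D` is an orientation of the edges of `G`. -/
def IsOrientation {V : Type*} (G : SimpleGraph V) (D : V → V → Prop) : Prop :=
  (∀ u v, G.Adj u v ↔ (D u v ∨ D v u)) ∧ ∀ u v, ¬ (D u v ∧ D v u)

noncomputable def outdeg {α : Type*} (r : α → α → Prop) (v : α) : ℕ := {w | r v w}.ncard
noncomputable def indeg {α : Type*} (r : α → α → Prop) (v : α) : ℕ := {w | r w v}.ncard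

/-- A rooted (binary) phylogenetic network with root `ρ` and leaf set `Y`:
a DAG with a unique root of indegree 0 and outdegree 2, leaves (outdegree 0,
indegree 1) exactly `Y`, and all non-root vertices of total degree 1 or 3. -/
def IsRootedNetwork {α : Type*} (r : α → α → Prop) (ρ : α) (Y : Set α) : Prop :=
  (∀ v, ¬ Relation.TransGen r v v) ∧
  indeg r ρ = 0 ∧ outdeg r ρ = 2 ∧
  (∀ v, indeg r v = 0 → v = ρ) ∧
  (∀ v, v ≠ ρ → indeg r v + outdeg r v = 1 ∨ indeg r v + outdeg r v = 3) ∧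
  {v | outdeg r v = 0} = Y ∧ (∀ v ∈ Y, indeg r v = 1)

/-- A rooted network is tree-based if it contains a spanning arborescence
rooted at `ρ` whose leaf set is `Y`. -/
def RootedTreeBased {α : Type*} (r : α → α → Prop) (ρ : α) (Y : Set α) : Prop :=
  ∃ t : α → α → Prop, (∀ a b, t a b → r a b) ∧
    (∀ v, Relation.ReflTransGen t ρ v) ∧
    (∀ v, v ≠ ρ → indeg t v = 1) ∧ indeg t ρ = 0 ∧
    {v | outdeg t v = 0} = Y

/-- `T` is obtained from `T'` by suppressing all degree-2 vertices, via the
embedding `f` of the vertices of `T` into those of `T'`. -/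
def Suppresses {A B : Type*} (T' : SimpleGraph A) (T : SimpleGraph B) (f : B → A) : Prop :=
  Function.Injective f ∧
  (∀ a : A, deg T' a ≠ 2 → a ∈ Set.range f) ∧
  (∀ b : B, deg T' (f b) ≠ 2) ∧
  ∀ b b' : B, T.Adj b b' ↔
    ∃ p : T'.Walk (f b) (f b'), p.IsPath ∧
      ∀ a ∈ p.support, a ≠ f b → a ≠ f b' → deg T' a = 2

/-- `G` is fully tree-based on `X`: every subtree of `G` whose leaf set is `X`
is spanning (hence a support-tree). -/
def FullyTreeBased {W : Type*} (G : SimpleGraph W) (X : Set W) : Prop :=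
  ∀ H : G.Subgraph, H.Connected → H.coe.IsAcyclic →
    {v | v ∈ H.verts ∧ (H.neighborSet v).ncard ≤ 1} = X → H.IsSpanning

section Aux

open SimpleGraph

variable {V : Type*}

/-- A bridge in a bigger graph is a bridge in a smaller one. -/
lemma aux_bridge_mono {W : Type*} {H G : SimpleGraph W} (hle : H ≤ G) {u v : W}
    (hadj : H.Adj u v) (hb : G.IsBridge s(u, v)) : H.IsBridge s(u, v) := by
  rw [isBridge_iff_adj_and_forall_walk_mem_edges] at hb ⊢
  refine fun p => ?_
  have h2 := hb (p.map (Hom.ofLE hle))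
  simpa [Walk.edges_map, Sym2.map_id'] using h2

lemma aux_pendant_bridge {W : Type*} {G : SimpleGraph W} {u v : W} (hadj : G.Adj u v)
    (hnb : G.neighborSet u ⊆ {v}) : G.IsBridge s(u, v) := by
  rw [isBridge_iff_adj_and_forall_walk_mem_edges]
  refine fun p => ?_
  cases p with
  | nil => exact absurd rfl hadj.ne
  | cons h q =>
    have : _ ∈ G.neighborSet u := h
    have hv := hnb this
    simp only [Set.mem_singleton_iff] at hv
    subst hv
    simp

lemma aux_reach_delete {W : Type*} {G : SimpleGraph W} {x y : W}
    (hr : (G \ fromEdgeSet {s(x, y)}).Reachable x y) {a b : W} (p : G.Walk a b) :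
    (G \ fromEdgeSet {s(x, y)}).Reachable a b := by
  induction p with
  | nil => exact Reachable.refl _
  | @cons a c b h q ih =>
    refine Reachable.trans ?_ ih
    by_cases he : s(a, c) = s(x, y)
    · rw [Sym2.eq_iff] at he
      rcases he with ⟨rfl, rfl⟩ | ⟨rfl, rfl⟩
      · exact hr
      · exact hr.symm
    · exact Adj.reachable (by rw [sdiff_adj]; exact ⟨h, by simp [fromEdgeSet_adj, he]⟩)

lemma aux_conn_delete {W : Type*} {G : SimpleGraph W} (hc : G.Connected) {x y : W}
    (hr : (G \ fromEdgeSet {s(x, y)}).Reachable x y) :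
    (G \ fromEdgeSet {s(x, y)}).Connected := by
  rw [connected_iff] at hc ⊢
  exact ⟨fun a b => (hc.1 a b).elim fun p => aux_reach_delete hr p, hc.2⟩

lemma aux_edgeSet_delete {W : Type*} (G : SimpleGraph W) {x y : W} (h : G.Adj x y) :
    (G \ fromEdgeSet {s(x, y)}).edgeSet = G.edgeSet \ {s(x, y)} := by
  simp only [edgeSet_sdiff, edgeSet_fromEdgeSet, edgeSet_sdiff_sdiff_isDiag]

lemma aux_card_le {W : Type*} [Fintype W] :
    ∀ (n : ℕ) (G : SimpleGraph W), G.edgeSet.ncard = n → G.Connected →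
      Fintype.card W ≤ n + 1 := by
  intro n
  induction n using Nat.strong_induction_on with
  | _ n ih =>
    intro G hn hc
    by_cases ha : G.IsAcyclic
    · have ht : G.IsTree := ⟨hc, ha⟩
      have : Fintype G.edgeSet := Set.Finite.fintype (Set.toFinite _)
      have hcard := ht.card_edgeFinset
      have : G.edgeFinset.card = G.edgeSet.ncard := (Set.ncard_eq_toFinset_card' _).symm
      omega
    · simp only [IsAcyclic, not_forall, not_not] at ha
      obtain ⟨v, c, hcyc⟩ := ha
      have hne : c.edges ≠ [] := by
        have h3 := hcyc.three_le_length
        intro h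
        rw [← Walk.length_edges, h] at h3
        simp at h3
      obtain ⟨e, he⟩ := List.exists_mem_of_ne_nil _ hne
      induction e with
      | _ x y =>
        have hadj : G.Adj x y := c.adj_of_mem_edges he
        have hreach := (adj_and_reachable_delete_edges_iff_exists_cycle.mpr ⟨v, c, hcyc, he⟩).2
        have hc' := aux_conn_delete hc hreach
        have hE : (G \ fromEdgeSet {s(x, y)}).edgeSet = G.edgeSet \ {s(x, y)} :=
          aux_edgeSet_delete G hadj
        have hmem : s(x, y) ∈ G.edgeSet := hadj
        have hpos : 1 ≤ n := by
          rw [← hn]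
          exact (Set.ncard_pos (Set.toFinite _)).mpr ⟨_, hmem⟩
        have hE' : (G \ fromEdgeSet {s(x, y)}).edgeSet.ncard = n - 1 := by
          rw [hE, Set.ncard_diff_singleton_of_mem hmem, hn]
        have := ih (n - 1) (by omega) _ hE' hc'
        omega

lemma aux_card_le' {W : Type*} [Fintype W] (G : SimpleGraph W) (hc : G.Connected)
    {v : W} {c : G.Walk v v} (hcyc : c.IsCycle) : Fintype.card W ≤ G.edgeSet.ncard := by
  have hne : c.edges ≠ [] := by
    have h3 := hcyc.three_le_length
    intro h
    rw [← Walk.length_edges, h] at h3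
    simp at h3
  obtain ⟨e, he⟩ := List.exists_mem_of_ne_nil _ hne
  induction e with
  | _ x y =>
    have hadj : G.Adj x y := c.adj_of_mem_edges he
    have hreach := (adj_and_reachable_delete_edges_iff_exists_cycle.mpr ⟨v, c, hcyc, he⟩).2
    have hc' := aux_conn_delete hc hreach
    have hmem : s(x, y) ∈ G.edgeSet := hadj
    have hpos : 1 ≤ G.edgeSet.ncard :=
      (Set.ncard_pos (Set.toFinite _)).mpr ⟨_, hmem⟩
    have hE' : (G \ fromEdgeSet {s(x, y)}).edgeSet.ncard = G.edgeSet.ncard - 1 := by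
      rw [aux_edgeSet_delete G hadj, Set.ncard_diff_singleton_of_mem hmem]
    have := aux_card_le _ _ hE' hc'
    omega

end Aux

section Aux2

open SimpleGraph

variable {V : Type*} {G : SimpleGraph V}

/-- Every edge lies on a cycle contained in the subgraph. -/
def OnCyc (K : G.Subgraph) : Prop :=
  ∀ ⦃x y : V⦄, K.Adj x y → ∃ (z : V) (c : G.Walk z z),
    c.IsCycle ∧ s(x, y) ∈ c.edges ∧ c.toSubgraph ≤ K

lemma aux_exists_coe_walk {K : G.Subgraph} :
    ∀ {x y : V} (p : G.Walk x y), p.toSubgraph ≤ K → ∀ (hx : x ∈ K.verts) (hy : y ∈ K.verts),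
      ∃ q : K.coe.Walk ⟨x, hx⟩ ⟨y, hy⟩, q.map K.hom = p := by
  intro x y p
  induction p with
  | nil => exact fun _ hx hy => ⟨Walk.nil, rfl⟩
  | @cons a b c hadj q ih =>
    intro h hx hy
    have h1 : G.subgraphOfAdj hadj ≤ K := le_trans le_sup_left h
    have h2 : q.toSubgraph ≤ K := le_trans le_sup_right h
    have hb : b ∈ K.verts := h2.1 q.start_mem_verts_toSubgraph
    have hK : K.Adj a b := h1.2 (by simp)
    obtain ⟨q', hq'⟩ := ih h2 hb hy
    exact ⟨Walk.cons (by exact hK : K.coe.Adj ⟨a, hx⟩ ⟨b, hb⟩) q',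
      by subst hq'; rfl⟩

lemma aux_onCyc_bridgeless {K : G.Subgraph} (h : OnCyc K) : Bridgeless K.coe := by
  intro e hb
  induction e using Sym2.ind with
  | _ a b =>
    obtain ⟨hadj, hcyc⟩ := hb
    rw [isBridge_iff_forall_cycle_notMem hadj] at hcyc
    obtain ⟨z, c, hc, he, hle⟩ := h (hadj : K.Adj a b)
    have hz : (z : V) ∈ K.verts := hle.1 c.start_mem_verts_toSubgraph
    obtain ⟨q, hq⟩ := aux_exists_coe_walk c hle hz hz
    have hqc : q.IsCycle :=
      (Walk.map_isCycle_iff_of_injective Subgraph.hom_injective).mp (hq ▸ hc)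
    apply hcyc q hqc
    erw [← hq, Walk.edges_map] at he
    obtain ⟨e', he', heq⟩ := List.mem_map.mp he
    have heq' : e' = s(a, b) :=
      Sym2.map.injective Subtype.val_injective (by simpa using heq)
    rwa [heq'] at he'

lemma aux_bridgeless_onCyc {K : G.Subgraph} (h : Bridgeless K.coe) : OnCyc K := by
  intro x y hxy
  have hx : x ∈ K.verts := K.edge_vert hxy
  have hy : y ∈ K.verts := K.edge_vert hxy.symm
  have hadj : K.coe.Adj ⟨x, hx⟩ ⟨y, hy⟩ := hxy
  have hnb := h s(⟨x, hx⟩, ⟨y, hy⟩)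
  rw [isBridge_iff, not_and, not_not] at hnb
  obtain ⟨z, c, hc, he⟩ := adj_and_reachable_delete_edges_iff_exists_cycle.mp ⟨hadj, hnb hadj⟩
  refine ⟨z, c.map K.hom, hc.map Subgraph.hom_injective, ?_, ?_⟩
  · erw [Walk.edges_map]
    exact List.mem_map.mpr ⟨_, he, by simp⟩
  · erw [Walk.toSubgraph_map]
    exact Subgraph.coeSubgraph_le _

lemma aux_onCyc_sup {K K' : G.Subgraph} (h : OnCyc K) (h' : OnCyc K') : OnCyc (K ⊔ K') := by
  intro x y hxy
  cases hxy with
  | inl hxy =>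
    obtain ⟨z, c, hc, he, hle⟩ := h hxy
    exact ⟨z, c, hc, he, le_trans hle le_sup_left⟩
  | inr hxy =>
    obtain ⟨z, c, hc, he, hle⟩ := h' hxy
    exact ⟨z, c, hc, he, le_trans hle le_sup_right⟩

lemma aux_onCyc_toSubgraph {z : V} {c : G.Walk z z} (hc : c.IsCycle) : OnCyc c.toSubgraph :=
  fun x y hxy => ⟨z, c, hc, (Walk.mem_edges_toSubgraph c).mp hxy, le_refl _⟩

lemma aux_edge_ncard_coe (K : G.Subgraph) : K.coe.edgeSet.ncard = K.edgeSet.ncard := by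
  rw [← Subgraph.image_coe_edgeSet_coe]
  exact (Set.ncard_image_of_injective _ (Sym2.map.injective Subtype.val_injective)).symm

lemma aux_exists_blob [Fintype V] (H : G.Subgraph)
    (h1 : H.verts.Nontrivial) (h2 : H.Connected) (h3 : Bridgeless H.coe) :
    ∃ B : G.Subgraph, IsBlob G B ∧ H ≤ B := by
  classical
  set S : Set G.Subgraph := {K | H ≤ K ∧ K.verts.Nontrivial ∧ K.Connected ∧ Bridgeless K.coe}
    with hSdef
  have hS : H ∈ S := ⟨le_refl _, h1, h2, h3⟩
  set m : G.Subgraph → ℕ := fun K => K.verts.ncard + K.edgeSet.ncard with hmdef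
  have hbdd : BddAbove (m '' S) := by
    refine ⟨Nat.card V + Nat.card (Sym2 V), ?_⟩
    rintro n ⟨K, -, rfl⟩
    have hv := Set.ncard_le_ncard (Set.subset_univ K.verts) Set.finite_univ
    have he := Set.ncard_le_ncard (Set.subset_univ K.edgeSet) Set.finite_univ
    rw [Set.ncard_univ] at hv he
    exact add_le_add hv he
  obtain ⟨B, hBS, hBm⟩ := Nat.sSup_mem ((Set.Nonempty.image m ⟨H, hS⟩)) hbdd
  refine ⟨B, ⟨hBS.2.1, hBS.2.2.1, hBS.2.2.2, ?_⟩, hBS.1⟩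
  intro B' hnt hconn hbl hle
  have hB'S : B' ∈ S := ⟨le_trans hBS.1 hle, hnt, hconn, hbl⟩
  have hm1 : m B' ≤ m B := hBm ▸ le_csSup hbdd ⟨B', hB'S, rfl⟩
  have hv : B.verts ⊆ B'.verts := hle.1
  have he : B.edgeSet ⊆ B'.edgeSet := Subgraph.edgeSet_mono hle
  have hv' : B.verts.ncard ≤ B'.verts.ncard := Set.ncard_le_ncard hv (Set.toFinite _)
  have he' : B.edgeSet.ncard ≤ B'.edgeSet.ncard := Set.ncard_le_ncard he (Set.toFinite _)
  simp only [hmdef] at hm1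
  have hveq : B.verts = B'.verts :=
    (Set.eq_of_subset_of_ncard_le hv (by omega) (Set.toFinite _)).symm ▸ rfl
  have heeq : B.edgeSet = B'.edgeSet :=
    Set.eq_of_subset_of_ncard_le he (by omega) (Set.toFinite _) |>.symm.symm
  refine Subgraph.ext ?_ ?_
  · exact Set.eq_of_subset_of_ncard_le hv (by omega) (Set.toFinite _) |>.symm.symm
  · ext x y
    rw [← Subgraph.mem_edgeSet, ← Subgraph.mem_edgeSet, heeq]

end Aux2

section Aux3

open SimpleGraph

lemma aux_key {V : Type*} [Fintype V] {G : SimpleGraph V} (hL : Level G 1) {u v : V}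
    (hadj : G.Adj u v) (hnb : ¬ G.IsBridge s(u, v)) {w : V} (hwv : w ≠ v) (hadj2 : G.Adj u w) :
    (G \ fromEdgeSet {s(u, v)}).IsBridge s(u, w) := by
  classical
  have huv : u ≠ v := hadj.ne
  have hewne : s(u, w) ≠ s(u, v) := by
    intro h
    rw [Sym2.eq_iff] at h
    rcases h with ⟨-, h⟩ | ⟨h, -⟩
    · exact hwv h
    · exact huv h
  have hmem : s(u, w) ∈ (G \ fromEdgeSet {s(u, v)}).edgeSet := by
    rw [aux_edgeSet_delete G hadj]
    exact ⟨hadj2, hewne⟩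
  rw [isBridge_iff_forall_cycle_notMem hmem]
  intro z q hq hqe
  exfalso
  have hcyc1 : ∃ (z1 : V) (c : G.Walk z1 z1), c.IsCycle ∧ s(u, v) ∈ c.edges := by
    rw [← adj_and_reachable_delete_edges_iff_exists_cycle]
    refine ⟨hadj, ?_⟩
    by_contra hre
    exact hnb hre
  obtain ⟨z1, c1, hc1, he1⟩ := hcyc1
  have huC : u ∈ c1.toSubgraph.verts :=
    (Walk.mem_verts_toSubgraph c1).mpr (Walk.fst_mem_support_of_mem_edges c1 he1)
  have hvC : v ∈ c1.toSubgraph.verts :=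
    (Walk.mem_verts_toSubgraph c1).mpr (Walk.snd_mem_support_of_mem_edges c1 he1)
  obtain ⟨B, hB, hHB⟩ := aux_exists_blob c1.toSubgraph ⟨u, huC, v, hvC, huv⟩
    c1.toSubgraph_connected (aux_onCyc_bridgeless (aux_onCyc_toSubgraph hc1))
  obtain ⟨hBnt, hBconn, hBbl, hBmax⟩ := hB
  have hle : (G \ fromEdgeSet {s(u, v)}) ≤ G := sdiff_le
  set q' := q.map (Hom.ofLE hle) with hq'def
  have hq'c : q'.IsCycle := hq.map (fun _ _ h => h)
  have hqe' : s(u, w) ∈ q'.edges := by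
    rw [hq'def, Walk.edges_map]
    refine List.mem_map.mpr ⟨_, hqe, ?_⟩
    simp [Sym2.map_id']
  have hq'edges : ∀ e ∈ q'.edges, e ∈ (G \ fromEdgeSet {s(u, v)}).edgeSet := by
    intro e hee
    rw [hq'def, Walk.edges_map] at hee
    obtain ⟨e0, he0, rfl⟩ := List.mem_map.mp hee
    have h0 := q.edges_subset_edgeSet he0
    simpa [Sym2.map_id'] using h0
  have hDconn := q'.toSubgraph_connected
  have huD : u ∈ q'.toSubgraph.verts :=
    (Walk.mem_verts_toSubgraph q').mpr (Walk.fst_mem_support_of_mem_edges q' hqe')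
  have hsupconn : (B ⊔ q'.toSubgraph).Connected :=
    Subgraph.connected_sup hBconn.preconnected hDconn.preconnected ⟨u, hHB.1 huC, huD⟩
  have hsupbl : Bridgeless (B ⊔ q'.toSubgraph).coe :=
    aux_onCyc_bridgeless (aux_onCyc_sup (aux_bridgeless_onCyc hBbl) (aux_onCyc_toSubgraph hq'c))
  have hBD := hBmax (B ⊔ q'.toSubgraph)
    (hBnt.mono (Subgraph.verts_mono le_sup_left)) hsupconn hsupbl le_sup_left
  have hDB : q'.toSubgraph ≤ B := le_of_le_of_eq le_sup_right hBD.symm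
  have hlev := hL B ⟨hBnt, hBconn, hBbl, hBmax⟩
  have hfin : Fintype ↥B.verts := Fintype.ofFinite _
  have hcard : Fintype.card ↥B.verts = B.verts.ncard := by
    rw [← Nat.card_coe_set_eq, Nat.card_eq_fintype_card]
  have heB : B.Adj u v := hHB.2 (Subgraph.mem_edgeSet.mp ((Walk.mem_edges_toSubgraph c1).mpr he1))
  have huB : u ∈ B.verts := hHB.1 huC
  have hvB : v ∈ B.verts := hHB.1 hvC
  have hadjcoe : B.coe.Adj ⟨u, huB⟩ ⟨v, hvB⟩ := heB
  have hnbcoe := hBbl s(⟨u, huB⟩, ⟨v, hvB⟩)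
  rw [isBridge_iff, not_and, not_not] at hnbcoe
  have hconn' := aux_conn_delete hBconn.coe (hnbcoe hadjcoe)
  have hzB : z ∈ B.verts := hDB.1 q'.start_mem_verts_toSubgraph
  obtain ⟨qq, hqq⟩ := aux_exists_coe_walk q' hDB hzB hzB
  have hqqc : qq.IsCycle :=
    (Walk.map_isCycle_iff_of_injective Subgraph.hom_injective).mp (hqq ▸ hq'c)
  have hqqe : ∀ e ∈ qq.edges, e ∈ (B.coe \ fromEdgeSet {s(⟨u, huB⟩, ⟨v, hvB⟩)}).edgeSet := by
    intro e hee
    rw [aux_edgeSet_delete B.coe hadjcoe]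
    refine ⟨qq.edges_subset_edgeSet hee, ?_⟩
    intro heq
    rw [Set.mem_singleton_iff] at heq
    have hmm : Sym2.map Subtype.val e ∈ q'.edges := by
      erw [← hqq, Walk.edges_map]
      refine List.mem_map.mpr ⟨e, hee, ?_⟩
      simp
    rw [heq] at hmm
    simp only [Sym2.map_pair_eq] at hmm
    have h2 := hq'edges _ hmm
    rw [aux_edgeSet_delete G hadj] at h2
    exact h2.2 rfl
  have hqtc : (qq.transfer _ hqqe).IsCycle := hqqc.transfer hqqe
  have hcount := aux_card_le' _ hconn' hqtc
  have hemem : s(⟨u, huB⟩, ⟨v, hvB⟩) ∈ B.coe.edgeSet := hadjcoe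
  have hEdel : (B.coe \ fromEdgeSet {s(⟨u, huB⟩, ⟨v, hvB⟩)}).edgeSet.ncard
      = B.coe.edgeSet.ncard - 1 := by
    rw [aux_edgeSet_delete B.coe hadjcoe, Set.ncard_diff_singleton_of_mem hemem]
  have hEcoe := aux_edge_ncard_coe B
  have hepos : 0 < B.edgeSet.ncard := (Set.ncard_pos (Set.toFinite _)).mpr ⟨s(u, v), heB⟩
  have h2v : 2 ≤ B.verts.ncard := (Set.one_lt_ncard (Set.toFinite _)).mpr hBnt
  rw [hEdel, hEcoe, hcard] at hcount
  omega

end Aux3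

section Aux4

open SimpleGraph

lemma aux_nbhd_delete {V : Type*} {G : SimpleGraph V} {x y : V} (hxy : G.Adj x y) :
    (G \ fromEdgeSet {s(x, y)}).neighborSet x = G.neighborSet x \ {y} := by
  ext b
  simp only [mem_neighborSet, sdiff_adj, fromEdgeSet_adj, Set.mem_singleton_iff, Set.mem_diff]
  constructor
  · rintro ⟨h1, h2⟩
    exact ⟨h1, fun hby => h2 ⟨by rw [hby], h1.ne⟩⟩
  · rintro ⟨h1, hby⟩
    refine ⟨h1, ?_⟩
    rintro ⟨heq, -⟩
    rw [Sym2.eq_iff] at heq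
    rcases heq with ⟨-, hb⟩ | ⟨hxx, -⟩
    · exact hby hb
    · exact hxy.ne hxx

lemma aux_nbhd_delete' {V : Type*} {G : SimpleGraph V} {x y a : V} (hax : a ≠ x) (hay : a ≠ y) :
    (G \ fromEdgeSet {s(x, y)}).neighborSet a = G.neighborSet a := by
  ext b
  simp only [mem_neighborSet, sdiff_adj, fromEdgeSet_adj, Set.mem_singleton_iff]
  constructor
  · exact fun h => h.1
  · intro h
    refine ⟨h, ?_⟩
    rintro ⟨heq, -⟩
    rw [Sym2.eq_iff] at heq
    rcases heq with ⟨ha, -⟩ | ⟨ha, -⟩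
    · exact hax ha
    · exact hay ha

lemma aux_main {V : Type*} [Fintype V] :
    ∀ (n : ℕ) (G : SimpleGraph V), G.edgeSet.ncard = n → G.Connected →
      (∀ ⦃u v : V⦄, G.Adj u v → ¬ G.IsBridge s(u, v) →
        3 ≤ deg G u ∧ ∀ w, w ≠ v → G.Adj u w →
          (G \ fromEdgeSet {s(u, v)}).IsBridge s(u, w)) →
      ∃ T, T ≤ G ∧ T.IsTree ∧ ∀ x, deg T x ≤ 1 ↔ deg G x ≤ 1 := by
  intro n
  induction n using Nat.strong_induction_on with
  | _ n ih =>
    intro G hn hc hGood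
    by_cases ha : G.IsAcyclic
    · exact ⟨G, le_refl _, ⟨hc, ha⟩, fun _ => Iff.rfl⟩
    · simp only [IsAcyclic, not_forall, not_not] at ha
      obtain ⟨z, c, hcyc⟩ := ha
      have hne : c.edges ≠ [] := by
        have h3 := hcyc.three_le_length
        intro h
        rw [← Walk.length_edges, h] at h3
        simp at h3
      obtain ⟨e, he⟩ := List.exists_mem_of_ne_nil _ hne
      induction e using Sym2.ind with
      | _ x y =>
        have hadj : G.Adj x y := c.adj_of_mem_edges he
        have hnb : ¬ G.IsBridge s(x, y) := by
          rw [isBridge_iff_forall_cycle_notMem hadj]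
          push_neg
          exact ⟨z, c, hcyc, he⟩
        have hswap : (s(y, x) : Sym2 V) = s(x, y) := Sym2.eq_swap
        have hnb' : ¬ G.IsBridge s(y, x) := by rw [hswap]; exact hnb
        have hGxy := hGood hadj hnb
        have hGyx := hGood hadj.symm hnb'
        set G' := G \ fromEdgeSet {s(x, y)} with hG'def
        have hle : G' ≤ G := sdiff_le
        have hreach : G'.Reachable x y :=
          (adj_and_reachable_delete_edges_iff_exists_cycle.mpr ⟨z, c, hcyc, he⟩).2
        have hc' : G'.Connected := aux_conn_delete hc hreach
        have hmemxy : s(x, y) ∈ G.edgeSet := hadj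
        have hmemyx : y ∈ G.neighborSet x := hadj
        have hmemxy' : x ∈ G.neighborSet y := hadj.symm
        have hE' : G'.edgeSet.ncard = n - 1 := by
          rw [hG'def, aux_edgeSet_delete G hadj,
            Set.ncard_diff_singleton_of_mem hmemxy, hn]
        have hpos : 1 ≤ n := hn ▸ (Set.ncard_pos (Set.toFinite _)).mpr ⟨_, hmemxy⟩
        have hdegx : deg G' x = deg G x - 1 := by
          rw [deg, deg, hG'def, aux_nbhd_delete hadj,
            Set.ncard_diff_singleton_of_mem hmemyx]
        have hdegy : deg G' y = deg G y - 1 := by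
          rw [deg, deg, hG'def, ← hswap, aux_nbhd_delete hadj.symm,
            Set.ncard_diff_singleton_of_mem hmemxy']
        have hdego : ∀ a, a ≠ x → a ≠ y → deg G' a = deg G a := by
          intro a hax hay
          rw [deg, deg, hG'def, aux_nbhd_delete' hax hay]
        have hkey : ∀ a b : V, G'.Adj a b → ¬ G'.IsBridge s(a, b) → a ≠ x ∧ a ≠ y := by
          intro a b hab hnab
          have hab' := hab
          rw [hG'def, sdiff_adj, fromEdgeSet_adj] at hab'
          constructor
          · rintro rfl
            have hby : b ≠ y := by
              rintro rfl
              exact hab'.2 ⟨rfl, hab'.1.ne⟩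
            exact hnab (hGxy.2 b hby hab'.1)
          · rintro rfl
            have hbx : b ≠ x := by
              rintro rfl
              exact hab'.2 ⟨hswap, hab'.1.ne⟩
            have hbr := hGyx.2 b hbx hab'.1
            rw [hswap] at hbr
            exact hnab hbr
        have hGood' : ∀ ⦃u' v' : V⦄, G'.Adj u' v' → ¬ G'.IsBridge s(u', v') →
            3 ≤ deg G' u' ∧ ∀ w, w ≠ v' → G'.Adj u' w →
              (G' \ fromEdgeSet {s(u', v')}).IsBridge s(u', w) := by
          intro u' v' hadj' hnb'
          have hnbG : ¬ G.IsBridge s(u', v') := fun hb => hnb' (aux_bridge_mono hle hadj' hb)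
          obtain ⟨hu'x, hu'y⟩ := hkey u' v' hadj' hnb'
          have hswap' : (s(v', u') : Sym2 V) = s(u', v') := Sym2.eq_swap
          have hnb'' : ¬ G'.IsBridge s(v', u') := by rw [hswap']; exact hnb'
          obtain ⟨hv'x, hv'y⟩ := hkey v' u' hadj'.symm hnb''
          have hGuv := hGood (hle hadj') hnbG
          constructor
          · rw [hdego u' hu'x hu'y]
            exact hGuv.1
          · intro w hw hadjw
            have hb := hGuv.2 w hw (hle hadjw)
            refine aux_bridge_mono ?_ ?_ hb
            · intro a b hab
              rw [sdiff_adj] at hab ⊢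
              exact ⟨hle hab.1, hab.2⟩
            · rw [sdiff_adj]
              refine ⟨hadjw, ?_⟩
              rw [fromEdgeSet_adj]
              rintro ⟨heq, -⟩
              rw [Set.mem_singleton_iff, Sym2.eq_iff] at heq
              rcases heq with ⟨-, hwv⟩ | ⟨huv', -⟩
              · exact hw hwv
              · exact hadj'.ne huv'
        obtain ⟨T, hTle, hTtree, hTiff⟩ := ih (n - 1) (by omega) G' hE' hc' hGood'
        refine ⟨T, le_trans hTle hle, hTtree, ?_⟩
        intro a
        rw [hTiff a]
        by_cases hax : a = x
        · subst hax
          have h3 := hGxy.1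
          constructor
          · intro h; omega
          · intro h; omega
        · by_cases hay : a = y
          · subst hay
            have h3 := hGyx.1
            constructor
            · intro h; omega
            · intro h; omega
          · rw [hdego a hax hay]

end Aux4

/-- Every proper level-1 network is tree-based. -/
theorem stmt4 {V : Type*} [Fintype V] (G : SimpleGraph V) (X : Set V)
    (hN : IsNetwork G X) (hP : ProperNet G X) (hL : Level G 1) :
    TreeBased G X := by
  obtain ⟨hconn, hdeg, hX⟩ := hN
  have hGood : ∀ ⦃u v : V⦄, G.Adj u v → ¬ G.IsBridge s(u, v) →
      3 ≤ deg G u ∧ ∀ w, w ≠ v → G.Adj u w →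
        (G \ fromEdgeSet {s(u, v)}).IsBridge s(u, w) := by
    intro u v hadj hnb
    constructor
    · rcases hdeg u with h1 | h3
      · exfalso
        apply hnb
        apply aux_pendant_bridge hadj
        intro b hb
        rw [Set.mem_singleton_iff]
        by_contra hbv
        have h2 : 2 ≤ deg G u := by
          rw [deg]
          have hsub : ({b, v} : Set V).ncard ≤ (G.neighborSet u).ncard := by
            refine Set.ncard_le_ncard ?_ (Set.toFinite _)
            intro d hd
            rcases hd with rfl | hd
            · exact hb
            · rw [Set.mem_singleton_iff] at hd
              subst hd
              exact hadj
          rwa [Set.ncard_pair hbv] at hsub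
        omega
      · omega
    · exact fun w hw hadjw => aux_key hL hadj hnb hw hadjw
  obtain ⟨T, hTle, hTtree, hTiff⟩ := aux_main _ G rfl hconn hGood
  refine ⟨T, hTle, hTtree, ?_⟩
  rw [← hX]
  ext a
  simp only [Set.mem_setOf_eq]
  exact hTiff a
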